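/- Let v ∈ ℝⁿ, λ > 0 and q ∈ [1,∞], and let q̄ be the conjugate exponent of q. Then the zero vector is a minimizer of g(x) = (1/2)‖x − v‖₂² + λ‖x‖_q over ℝⁿ if and only if λ ≥ ‖v‖_{q̄}. -/

import Mathlib

open scoped ENNReal BigOperators

/-- The vector ℓq norm for q ∈ [1,∞]. -/
noncomputable def lqNorm {n : ℕ} (q : ℝ≥0∞) (x : Fin n → ℝ) : ℝ :=
  if q = ⊤ then ⨆ i, |x i| else (∑ i, |x i| ^ q.toReal) ^ (1 / q.toReal)

/-- The objective `g(x) = (1/2)‖x − v‖₂² + λ‖x‖_q`. -/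
noncomputable def gObj {n : ℕ} (q : ℝ≥0∞) (lam : ℝ) (v x : Fin n → ℝ) : ℝ :=
  (1 / 2) * ∑ i, (x i - v i) ^ 2 + lam * lqNorm q x

section aux

variable {n : ℕ}

lemma lqNorm_nonneg (q : ℝ≥0∞) (x : Fin n → ℝ) : 0 ≤ lqNorm q x := by
  unfold lqNorm
  split
  · exact Real.iSup_nonneg fun i => abs_nonneg _
  · exact Real.rpow_nonneg (Finset.sum_nonneg fun i _ => Real.rpow_nonneg (abs_nonneg _) _) _

lemma toReal_one_le {q : ℝ≥0∞} (hq : 1 ≤ q) (hqt : q ≠ ⊤) : 1 ≤ q.toReal := by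
  rw [show (1:ℝ) = (1:ℝ≥0∞).toReal by simp]
  exact ENNReal.toReal_mono hqt hq

lemma lqNorm_zero {q : ℝ≥0∞} (hq : 1 ≤ q) : lqNorm q (0 : Fin n → ℝ) = 0 := by
  unfold lqNorm
  split
  · simp [Real.iSup_const_zero]
  · next h =>
    have hp : (1:ℝ) ≤ q.toReal := toReal_one_le hq h
    have hp0 : q.toReal ≠ 0 := by linarith
    simp [Real.zero_rpow hp0, Real.zero_rpow (inv_ne_zero hp0), one_div]

lemma lqNorm_smul {q : ℝ≥0∞} (hq : 1 ≤ q) {t : ℝ} (ht : 0 ≤ t) (x : Fin n → ℝ) :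
    lqNorm q (fun i => t * x i) = t * lqNorm q x := by
  unfold lqNorm
  split
  · rw [Real.mul_iSup_of_nonneg ht]
    congr 1; funext i; rw [abs_mul, abs_of_nonneg ht]
  · next h =>
    have hp : (1:ℝ) ≤ q.toReal := toReal_one_le hq h
    have hp0 : q.toReal ≠ 0 := by linarith
    have : ∀ i, |t * x i| ^ q.toReal = t ^ q.toReal * |x i| ^ q.toReal := by
      intro i
      rw [abs_mul, abs_of_nonneg ht, Real.mul_rpow ht (abs_nonneg _)]
    simp only [this, ← Finset.mul_sum]
    rw [Real.mul_rpow (Real.rpow_nonneg ht _)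
        (Finset.sum_nonneg fun i _ => Real.rpow_nonneg (abs_nonneg _) _),
      ← Real.rpow_mul ht, mul_one_div, div_self hp0, Real.rpow_one]

lemma lqNorm_one (x : Fin n → ℝ) : lqNorm 1 x = ∑ i, |x i| := by
  simp [lqNorm, ENNReal.one_ne_top]

lemma lqNorm_top (x : Fin n → ℝ) : lqNorm ⊤ x = ⨆ i, |x i| := if_pos rfl

/-- reduction: 0 is a minimizer iff the dual inequality holds -/
lemma reduce {q : ℝ≥0∞} (hq : 1 ≤ q) (lam : ℝ) (v : Fin n → ℝ) :
    (∀ y : Fin n → ℝ, gObj q lam v 0 ≤ gObj q lam v y) ↔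
      ∀ x : Fin n → ℝ, ∑ i, x i * v i ≤ lam * lqNorm q x := by
  have expand : ∀ y : Fin n → ℝ, gObj q lam v y =
      (1/2) * ∑ i, y i ^ 2 - ∑ i, y i * v i + (1/2) * ∑ i, v i ^ 2 + lam * lqNorm q y := by
    intro y
    unfold gObj
    have : ∀ i, (y i - v i) ^ 2 = y i ^ 2 - 2 * (y i * v i) + v i ^ 2 := fun i => by ring
    simp only [this, Finset.sum_add_distrib, Finset.sum_sub_distrib, ← Finset.mul_sum]
    ring
  have g0 : gObj q lam v 0 = (1/2) * ∑ i, v i ^ 2 := by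
    unfold gObj
    rw [lqNorm_zero hq]
    simp
  constructor
  · intro h x
    -- for every t > 0 we get the scaled inequality
    have key : ∀ t : ℝ, 0 < t → ∑ i, x i * v i ≤ (t/2) * ∑ i, x i ^ 2 + lam * lqNorm q x := by
      intro t ht
      have := h (fun i => t * x i)
      rw [g0, expand, lqNorm_smul hq ht.le] at this
      have h2 : ∀ i, (t * x i) ^ 2 = t ^ 2 * x i ^ 2 := fun i => by ring
      have h3 : ∀ i, (t * x i) * v i = t * (x i * v i) := fun i => by ring
      simp only [h2, h3, ← Finset.mul_sum] at this
      have h4 : t * ∑ i, x i * v i ≤ t * ((t/2) * ∑ i, x i ^ 2 + lam * lqNorm q x) := by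
        nlinarith [this]
      exact (mul_le_mul_iff_right₀ ht).mp h4
    by_contra hcon
    push_neg at hcon
    have hS : (0:ℝ) ≤ ∑ i, x i ^ 2 := Finset.sum_nonneg fun i _ => sq_nonneg _
    set δ := ∑ i, x i * v i - lam * lqNorm q x with hδ
    have hδpos : 0 < δ := by simp only [hδ]; linarith
    have ht : 0 < δ / (∑ i, x i ^ 2 + 1) := by positivity
    have hk := key _ ht
    have : δ / (∑ i, x i ^ 2 + 1) / 2 * ∑ i, x i ^ 2 < δ := by
      rw [div_div, div_mul_eq_mul_div, div_lt_iff₀ (by positivity)]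
      nlinarith
    simp only [hδ] at this hk ⊢
    linarith
  · intro h y
    rw [g0, expand]
    have hS : (0:ℝ) ≤ ∑ i, y i ^ 2 := Finset.sum_nonneg fun i _ => sq_nonneg _
    have := h y
    linarith

lemma mySignMulSelf (a : ℝ) : Real.sign a * a = |a| := by
  rcases lt_trichotomy a 0 with h | h | h
  · rw [Real.sign_of_neg h, abs_of_neg h]; ring
  · simp [h]
  · rw [Real.sign_of_pos h, abs_of_pos h]; ring

end aux

theorem stmt1 {n : ℕ} (v : Fin n → ℝ) (lam : ℝ) (hlam : 0 < lam)
    (q qb : ℝ≥0∞) (hq : 1 ≤ q) (hconj : 1 / q + 1 / qb = 1) :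
    (∀ y : Fin n → ℝ, gObj q lam v 0 ≤ gObj q lam v y) ↔ lqNorm qb v ≤ lam := by
  rw [reduce hq]
  by_cases hq1 : q = 1
  · -- q = 1, qb = ⊤
    have hqb : qb = ⊤ := by
      subst hq1
      rw [show (1:ℝ≥0∞)/1 = 1 by simp] at hconj
      have h0 : (1:ℝ≥0∞) + 1/qb = 1 + 0 := by simpa using hconj
      have : 1/qb = 0 := (ENNReal.add_right_inj (by simp)).mp h0
      rwa [one_div, ENNReal.inv_eq_zero] at this
    subst hq1 hqb
    constructor
    · intro h
      rw [lqNorm_top]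
      refine Real.iSup_le (fun i => ?_) hlam.le
      by_cases hvi : v i = 0
      · simp [hvi, hlam.le]
      · have hmain := h (fun j => if j = i then v i else 0)
        rw [lqNorm_one] at hmain
        have hsum1 : (∑ j, |if j = i then v i else 0|) = |v i| := by
          simp [apply_ite abs, Finset.sum_ite_eq']
        have hsum2 : (∑ j, (if j = i then v i else 0) * v j) = v i * v i := by
          simp [ite_mul, Finset.sum_ite_eq']
        rw [hsum1, hsum2] at hmain
        have habs : |v i| > 0 := abs_pos.mpr hvi
        nlinarith [abs_mul_abs_self (v i), hmain]
    · intro h x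
      rw [lqNorm_top] at h
      have hM : ∀ i, |v i| ≤ lam := fun i =>
        le_trans (le_ciSup (Set.Finite.bddAbove (Set.finite_range fun j => |v j|)) i) h
      rw [lqNorm_one]
      calc ∑ i, x i * v i ≤ ∑ i, |x i| * lam := by
            refine Finset.sum_le_sum fun i _ => ?_
            calc x i * v i ≤ |x i * v i| := le_abs_self _
              _ = |x i| * |v i| := abs_mul _ _
              _ ≤ |x i| * lam := mul_le_mul_of_nonneg_left (hM i) (abs_nonneg _)
        _ = lam * ∑ i, |x i| := by rw [← Finset.sum_mul]; ring
  by_cases hqt : q = ⊤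
  · -- q = ⊤, qb = 1
    have hqb : qb = 1 := by
      subst hqt
      simp only [one_div, ENNReal.inv_top, zero_add] at hconj
      rwa [ENNReal.inv_eq_one] at hconj
    subst hqt hqb
    constructor
    · intro h
      rw [lqNorm_one]
      set x : Fin n → ℝ := fun i => if v i = 0 then 0 else v i / |v i| with hx
      have hxv : ∀ i, x i * v i = |v i| := by
        intro i
        by_cases hvi : v i = 0
        · simp [hx, hvi]
        · simp only [hx, if_neg hvi]
          rw [div_mul_eq_mul_div, div_eq_iff (abs_ne_zero.mpr hvi)]
          exact (abs_mul_abs_self _).symm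
      have hxb : lqNorm ⊤ x ≤ 1 := by
        rw [lqNorm_top]
        refine Real.iSup_le (fun i => ?_) zero_le_one
        by_cases hvi : v i = 0
        · simp [hx, hvi]
        · simp only [hx, if_neg hvi, abs_div, abs_abs]
          rw [div_self (abs_ne_zero.mpr hvi)]
      calc ∑ i, |v i| = ∑ i, x i * v i := by simp [hxv]
        _ ≤ lam * lqNorm ⊤ x := h x
        _ ≤ lam * 1 := mul_le_mul_of_nonneg_left hxb hlam.le
        _ = lam := mul_one lam
    · intro h x
      rw [lqNorm_one] at h
      have hb : ∀ i, |x i| ≤ lqNorm ⊤ x := fun i => by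
        rw [lqNorm_top]
        exact le_ciSup (Set.Finite.bddAbove (Set.finite_range fun j => |x j|)) i
      calc ∑ i, x i * v i ≤ ∑ i, lqNorm ⊤ x * |v i| := by
            refine Finset.sum_le_sum fun i _ => ?_
            calc x i * v i ≤ |x i| * |v i| := by rw [← abs_mul]; exact le_abs_self _
              _ ≤ lqNorm ⊤ x * |v i| := mul_le_mul_of_nonneg_right (hb i) (abs_nonneg _)
        _ = lqNorm ⊤ x * ∑ i, |v i| := by rw [← Finset.mul_sum]
        _ ≤ lqNorm ⊤ x * lam := mul_le_mul_of_nonneg_left h (lqNorm_nonneg _ _)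
        _ = lam * lqNorm ⊤ x := mul_comm _ _
  · -- 1 < q < ⊤
    have hq0 : q ≠ 0 := by positivity
    have hqgt : 1 < q := lt_of_le_of_ne hq (Ne.symm hq1)
    have hqbne0 : qb ≠ 0 := by
      intro h; rw [h] at hconj; simp at hconj
    have hqbt : qb ≠ ⊤ := by
      intro h
      rw [h] at hconj
      simp only [one_div, ENNReal.inv_top, add_zero] at hconj
      exact hq1 (by rwa [ENNReal.inv_eq_one] at hconj)
    set p := q.toReal with hp
    set pb := qb.toReal with hpb
    have hsum : p⁻¹ + pb⁻¹ = 1 := by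
      have := congrArg ENNReal.toReal hconj
      rw [ENNReal.toReal_add (by simp [hq0]) (by simp [hqbne0])] at this
      simpa [one_div, ENNReal.toReal_inv] using this
    have hp1 : 1 < p := by
      rw [hp, ← ENNReal.toReal_one]
      exact ENNReal.toReal_lt_toReal (by simp) hqt |>.mpr hqgt
    have hcj : p.HolderConjugate pb := Real.holderConjugate_iff.mpr ⟨hp1, hsum⟩
    have hpb1 : 1 < pb := hcj.symm.lt
    have hpb0 : pb ≠ 0 := by linarith
    have hp0 : p ≠ 0 := by linarith
    have hlq : ∀ x : Fin n → ℝ, lqNorm q x = (∑ i, |x i| ^ p) ^ (1/p) := fun x => by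
      simp [lqNorm, hqt, hp, one_div]
    have hlqb : ∀ x : Fin n → ℝ, lqNorm qb x = (∑ i, |x i| ^ pb) ^ (1/pb) := fun x => by
      simp [lqNorm, hqbt, hpb, one_div]
    constructor
    · intro h
      rw [hlqb]
      set x : Fin n → ℝ := fun i => Real.sign (v i) * |v i| ^ (pb - 1) with hx
      set S := ∑ i, |v i| ^ pb with hS
      have hSnn : 0 ≤ S := Finset.sum_nonneg fun i _ => Real.rpow_nonneg (abs_nonneg _) _
      have hxv : ∀ i, x i * v i = |v i| ^ pb := by
        intro i
        by_cases hvi : v i = 0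
        · simp [hx, hvi, Real.zero_rpow hpb0]
        · have habs : (0:ℝ) < |v i| := abs_pos.mpr hvi
          rw [hx]
          calc Real.sign (v i) * |v i| ^ (pb - 1) * v i
              = |v i| ^ (pb - 1) * (Real.sign (v i) * v i) := by ring
            _ = |v i| ^ (pb - 1) * |v i| := by rw [mySignMulSelf]
            _ = |v i| ^ (pb - 1) * |v i| ^ (1:ℝ) := by rw [Real.rpow_one]
            _ = |v i| ^ pb := by rw [← Real.rpow_add habs]; ring_nf
      have hxabs : ∀ i, |x i| = |v i| ^ (pb - 1) := by
        intro i
        by_cases hvi : v i = 0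
        · simp [hx, hvi, Real.zero_rpow (by intro hc; exact hpb0 (by linarith [hc] : pb = 0) : pb - 1 ≠ 0)]
        · rw [hx, abs_mul, abs_of_nonneg (Real.rpow_nonneg (abs_nonneg _) _)]
          rcases Real.sign_apply_eq_of_ne_zero (v i) hvi with hs | hs <;> simp [hs]
      have hxp : ∀ i, |x i| ^ p = |v i| ^ pb := by
        intro i
        rw [hxabs, ← Real.rpow_mul (abs_nonneg _)]
        congr 1
        have h5 : p⁻¹ + pb⁻¹ = 1 := hsum
        field_simp at h5
        nlinarith [h5]
      have hmain := h x
      rw [hlq] at hmain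
      simp only [hxv, hxp] at hmain
      rw [← hS] at hmain
      -- hmain : S ≤ lam * S ^ (1/p)
      by_cases hS0 : S = 0
      · rw [hS0, Real.zero_rpow (one_div_ne_zero hpb0)]
        exact hlam.le
      · have hSpos : 0 < S := lt_of_le_of_ne hSnn (Ne.symm hS0)
        have hfact : S ^ (1/pb) * S ^ (1/p) = S := by
          rw [← Real.rpow_add hSpos]
          rw [show 1/pb + 1/p = 1 by rw [one_div, one_div]; linarith [hsum], Real.rpow_one]
        have hppos : 0 < S ^ (1/p) := Real.rpow_pos_of_pos hSpos _
        have h6 : S ^ (1/pb) * S ^ (1/p) ≤ lam * S ^ (1/p) := by rw [hfact]; exact hmain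
        exact le_of_mul_le_mul_right h6 hppos
    · intro h x
      rw [hlqb] at h
      rw [hlq]
      calc ∑ i, x i * v i ≤ (∑ i, |x i| ^ p) ^ (1/p) * (∑ i, |v i| ^ pb) ^ (1/pb) :=
            Real.inner_le_Lp_mul_Lq Finset.univ x v hcj
        _ ≤ (∑ i, |x i| ^ p) ^ (1/p) * lam := by
            refine mul_le_mul_of_nonneg_left h ?_
            exact Real.rpow_nonneg (Finset.sum_nonneg fun i _ => Real.rpow_nonneg (abs_nonneg _) _) _
        _ = lam * (∑ i, |x i| ^ p) ^ (1/p) := mul_comm _ _
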